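/- (Entropy derivative sign) For a full-support non-uniform distribution p on a finite set and the escort family p_α(y) ∝ p(y)^α, the map α ↦ H(p_α) is strictly decreasing at α = 1; equivalently, d/dα H(p_α) |_{α=1} = −Var_{y∼p}(log p(y)) < 0. -/

import Mathlib

open Real Finset

/-- Entropy derivative sign: along the escort family, the entropy has
derivative −Var_{y∼p}(log p(y)) < 0 at α = 1. -/
theorem escort_entropy_deriv_at_one {Y : Type*} [Fintype Y]
    (hcard : 2 ≤ Fintype.card Y)
    (p : Y → ℝ) (hpos : ∀ y, 0 < p y) (hsum : ∑ y, p y = 1)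
    (hnonunif : ∃ y₁ y₂, p y₁ ≠ p y₂) :
    HasDerivAt
      (fun α : ℝ =>
        -∑ y, (p y ^ α / ∑ z, p z ^ α) * Real.log (p y ^ α / ∑ z, p z ^ α))
      (-((∑ y, p y * Real.log (p y) ^ 2) - (∑ y, p y * Real.log (p y)) ^ 2)) 1 ∧
    -((∑ y, p y * Real.log (p y) ^ 2) - (∑ y, p y * Real.log (p y)) ^ 2) < 0 := by
  have hne : Nonempty Y := Fintype.card_pos_iff.mp (by omega)
  set T : ℝ := ∑ y, p y * Real.log (p y) with hTdef
  set U : ℝ := ∑ y, p y * Real.log (p y) ^ 2 with hUdef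
  have hSpos : ∀ α : ℝ, 0 < ∑ z, p z ^ α := fun α =>
    Finset.sum_pos (fun z _ => Real.rpow_pos_of_pos (hpos z) α) Finset.univ_nonempty
  constructor
  · have hfun : (fun α : ℝ =>
        -∑ y, (p y ^ α / ∑ z, p z ^ α) * Real.log (p y ^ α / ∑ z, p z ^ α))
        = fun α : ℝ => Real.log (∑ z, p z ^ α)
            - α * (∑ y, p y ^ α * Real.log (p y)) / (∑ z, p z ^ α) := by
      funext α
      have hS := hSpos α
      have hterm : ∀ y, (p y ^ α / ∑ z, p z ^ α) * Real.log (p y ^ α / ∑ z, p z ^ α)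
          = (p y ^ α * (α * Real.log (p y)) - p y ^ α * Real.log (∑ z, p z ^ α))
              / (∑ z, p z ^ α) := by
        intro y
        rw [Real.log_div (Real.rpow_pos_of_pos (hpos y) α).ne' hS.ne',
            Real.log_rpow (hpos y)]
        field_simp
      rw [Finset.sum_congr rfl fun y _ => hterm y, ← Finset.sum_div,
          Finset.sum_sub_distrib]
      have h1 : ∑ y, p y ^ α * (α * Real.log (p y))
          = α * ∑ y, p y ^ α * Real.log (p y) := by
        rw [Finset.mul_sum]; exact Finset.sum_congr rfl fun y _ => by ring
      have h2 : ∑ y : Y, p y ^ α * Real.log (∑ z, p z ^ α)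
          = (∑ z, p z ^ α) * Real.log (∑ z, p z ^ α) := by
        rw [← Finset.sum_mul]
      rw [h1, h2]
      field_simp
      ring
    rw [hfun]
    have hS1 : (∑ z, p z ^ (1 : ℝ)) = 1 := by
      simpa [Real.rpow_one] using hsum
    have hDS : HasDerivAt (fun α : ℝ => ∑ z, p z ^ α) T 1 := by
      have := HasDerivAt.fun_sum (u := Finset.univ)
        (fun z _ => (Real.hasStrictDerivAt_const_rpow (hpos z) 1).hasDerivAt)
      simpa [Real.rpow_one, hTdef] using this
    have hDT : HasDerivAt (fun α : ℝ => ∑ y, p y ^ α * Real.log (p y)) U 1 := by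
      have := HasDerivAt.fun_sum (u := Finset.univ)
        (fun y _ => ((Real.hasStrictDerivAt_const_rpow (hpos y) 1).hasDerivAt).mul_const (Real.log (p y)))
      simpa [Real.rpow_one, hUdef, sq, mul_assoc] using this
    have hlog : HasDerivAt (fun α : ℝ => Real.log (∑ z, p z ^ α))
        (T / (∑ z, p z ^ (1:ℝ))) 1 := hDS.log (hSpos 1).ne'
    have hmul : HasDerivAt (fun α : ℝ => α * ∑ y, p y ^ α * Real.log (p y))
        (1 * (∑ y, p y ^ (1:ℝ) * Real.log (p y)) + 1 * U) 1 :=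
      (hasDerivAt_id 1).mul hDT
    have hdiv := hmul.fun_div hDS (hSpos 1).ne'
    have := hlog.fun_sub hdiv
    refine this.congr_deriv ?_
    have hT1 : (∑ y, p y ^ (1:ℝ) * Real.log (p y)) = T := by
      simp [Real.rpow_one, hTdef]
    rw [hS1, hT1]
    field_simp
    ring
  · have key : U - T ^ 2 = ∑ y, p y * (Real.log (p y) - T) ^ 2 := by
      have hterm : ∀ y, p y * (Real.log (p y) - T) ^ 2
          = p y * Real.log (p y) ^ 2 - 2 * T * (p y * Real.log (p y)) + T ^ 2 * p y :=
        fun y => by ring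
      rw [Finset.sum_congr rfl fun y _ => hterm y, Finset.sum_add_distrib,
          Finset.sum_sub_distrib, ← Finset.mul_sum, ← Finset.mul_sum, hsum,
          ← hTdef, ← hUdef]
      ring
    have hposvar : 0 < U - T ^ 2 := by
      rw [key]
      obtain ⟨y₁, y₂, hne12⟩ := hnonunif
      have hlogne : Real.log (p y₁) ≠ Real.log (p y₂) := by
        intro h
        exact hne12 (by rw [← Real.exp_log (hpos y₁), ← Real.exp_log (hpos y₂), h])
      have hy : Real.log (p y₁) ≠ T ∨ Real.log (p y₂) ≠ T := by
        by_contra h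
        push_neg at h
        exact hlogne (h.1.trans h.2.symm)
      have hnn : ∀ y ∈ Finset.univ, 0 ≤ p y * (Real.log (p y) - T) ^ 2 :=
        fun y _ => mul_nonneg (hpos y).le (sq_nonneg _)
      obtain hy | hy := hy
      · exact Finset.sum_pos' hnn ⟨y₁, Finset.mem_univ _,
          mul_pos (hpos y₁) (pow_two_pos_of_ne_zero (sub_ne_zero.mpr hy))⟩
      · exact Finset.sum_pos' hnn ⟨y₂, Finset.mem_univ _,
          mul_pos (hpos y₂) (pow_two_pos_of_ne_zero (sub_ne_zero.mpr hy))⟩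
    linarith
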